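/- (Lemma 2.2, case c) Let 1 ≤ k ≤ m, let y ∈ ℝ^m be sorted in nonincreasing order with T_k(y) > 0, and let ȳ := proj_{B_k}(y) have index pair (k̄0, k̄1) associated with k and partition (ᾱ, β̄, γ̄). Assume k = k̄1. Then the Jacobian of proj_{B_k} at y is the block-diagonal matrix diag( I_{|ᾱ|+|β̄|} − c c^⊤ / ‖c‖₂² , I_{|γ̄|} ), where c := 1_{|ᾱ|+|β̄|} is the all-ones vector of length |ᾱ|+|β̄|. -/

import Mathlib

open Filter Topology Matrix

noncomputable def topkSum {ι : Type*} [Fintype ι] (k : ℕ) (x : ι → ℝ) : ℝ :=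
  sSup {v : ℝ | ∃ s : Finset ι, s.card = k ∧ v = ∑ i ∈ s, x i}

def Bk (m k : ℕ) : Set (Fin m → ℝ) := {x | topkSum k x ≤ 0}

noncomputable def sortDesc {m : ℕ} (x : Fin m → ℝ) : Fin m → ℝ :=
  fun i => (x ∘ Tuple.sort x) i.rev

noncomputable def ent {m : ℕ} (x : Fin m → ℝ) (i : ℕ) : ℝ :=
  if h : 1 ≤ i ∧ i ≤ m then x ⟨i - 1, by omega⟩ else 0

noncomputable def entE {m : ℕ} (x : Fin m → ℝ) (i : ℕ) : EReal :=
  if h : 1 ≤ i ∧ i ≤ m then ((x ⟨i - 1, by omega⟩ : ℝ) : EReal)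
  else if i = 0 then ⊤ else ⊥

def IsIndexPairOf {m : ℕ} (k : ℕ) (x : Fin m → ℝ) (k0 k1 : ℕ) : Prop :=
  k0 + 1 ≤ k ∧ k ≤ k1 ∧ k1 ≤ m ∧
  entE x (k0 + 1) < entE x k0 ∧
  (∀ i : ℕ, k0 + 1 ≤ i → i ≤ k1 → entE x i = entE x k) ∧
  entE x (k1 + 1) < entE x k1

def IsEProjOn {m : ℕ} (S : Set (Fin m → ℝ)) (y p : Fin m → ℝ) : Prop :=
  p ∈ S ∧ ∀ z ∈ S, ∑ i, (y i - p i) ^ 2 ≤ ∑ i, (y i - z i) ^ 2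

def ProjKKT {m : ℕ} (k : ℕ) (y ybar μ : Fin m → ℝ) (lam θ : ℝ) (k0 k1 : ℕ) : Prop :=
  IsIndexPairOf k ybar k0 k1 ∧
  (∀ i : Fin m, (i : ℕ) < k0 → ybar i = y i - lam ∧ μ i = 1) ∧
  (∀ i : Fin m, k0 ≤ (i : ℕ) → (i : ℕ) < k1 →
      ybar i = y i - lam * μ i ∧ ybar i = θ ∧ 0 ≤ μ i ∧ μ i ≤ 1) ∧
  (∑ i : Fin m, (if k0 ≤ (i : ℕ) ∧ (i : ℕ) < k1 then μ i else 0)) = (k : ℝ) - (k0 : ℝ) ∧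
  (∀ i : Fin m, k1 ≤ (i : ℕ) → ybar i = y i ∧ μ i = 0) ∧
  (∑ i : Fin m, (if (i : ℕ) < k0 then y i else 0)) - (k0 : ℝ) * lam + ((k : ℝ) - (k0 : ℝ)) * θ = 0 ∧
  0 < lam ∧
  (θ : EReal) < entE ybar k0 ∧ entE ybar (k1 + 1) < (θ : EReal)

noncomputable def cvar {m : ℕ} (τ : ℝ) (g : Fin m → ℝ) : ℝ :=
  ⨅ t : ℝ, t + (1 / ((1 - τ) * m)) * ∑ j, max (g j - t) 0

/-- Lemma 2.2, case c: sorted `y` with `T_k(y) > 0`, projection `ȳ` with index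
pair `(k̄0, k̄1)` and `k = k̄1`.  The Jacobian of `proj_{B_k}` at `y` is
`diag(I_{|ᾱ|+|β̄|} - c cᵀ/‖c‖₂², I_{|γ̄|})` with `c` the all-ones vector of length `|ᾱ|+|β̄|`. -/

lemma topkSum_set_eq {m k : ℕ} (x : Fin m → ℝ) :
    {v : ℝ | ∃ s : Finset (Fin m), s.card = k ∧ v = ∑ i ∈ s, x i} =
      ↑((Finset.univ.filter (fun s : Finset (Fin m) => s.card = k)).image
        (fun s => ∑ i ∈ s, x i)) := by
  ext v
  simp [eq_comm]

lemma topkSum_bddAbove {m k : ℕ} (x : Fin m → ℝ) :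
    BddAbove {v : ℝ | ∃ s : Finset (Fin m), s.card = k ∧ v = ∑ i ∈ s, x i} := by
  rw [topkSum_set_eq]
  exact (Finset.bddAbove _)

lemma topkSum_set_nonempty {m k : ℕ} (hkm : k ≤ m) (x : Fin m → ℝ) :
    Set.Nonempty {v : ℝ | ∃ s : Finset (Fin m), s.card = k ∧ v = ∑ i ∈ s, x i} := by
  obtain ⟨t, -, ht⟩ := Finset.exists_subset_card_eq (s := (Finset.univ : Finset (Fin m))) (n := k)
    (by simp [hkm])
  exact ⟨∑ i ∈ t, x i, t, ht, rfl⟩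

lemma le_topkSum {m k : ℕ} (x : Fin m → ℝ) {s : Finset (Fin m)} (hs : s.card = k) :
    ∑ i ∈ s, x i ≤ topkSum k x :=
  le_csSup (topkSum_bddAbove x) ⟨s, hs, rfl⟩

lemma topkSum_le {m k : ℕ} (hkm : k ≤ m) (x : Fin m → ℝ) {a : ℝ}
    (h : ∀ s : Finset (Fin m), s.card = k → ∑ i ∈ s, x i ≤ a) :
    topkSum k x ≤ a := by
  refine csSup_le (topkSum_set_nonempty hkm x) ?_
  rintro v ⟨s, hs, rfl⟩
  exact h s hs

def Fk (m k : ℕ) : Finset (Fin m) := Finset.univ.filter fun i => (i : ℕ) < k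

lemma mem_Fk {m k : ℕ} {i : Fin m} : i ∈ Fk m k ↔ (i : ℕ) < k := by
  simp [Fk]

lemma card_Fk (m k : ℕ) (h : k ≤ m) : (Fk m k).card = k := by
  have : Fk m k = Finset.univ.map (Fin.castLEEmb h) := by
    ext i
    simp only [mem_Fk, Finset.mem_map, Finset.mem_univ, true_and]
    constructor
    · intro hi; exact ⟨⟨i, hi⟩, by simp [Fin.castLEEmb, Fin.ext_iff]⟩
    · rintro ⟨j, rfl⟩
      simpa using j.isLt
  rw [this, Finset.card_map, Finset.card_univ, Fintype.card_fin]

lemma Fk_succ (m k : ℕ) (hk1 : 1 ≤ k) (hkm : k ≤ m) :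
    Fk m k = insert (⟨k - 1, by omega⟩ : Fin m) (Fk m (k - 1)) := by
  ext i
  simp only [mem_Fk, Finset.mem_insert, Fin.ext_iff]
  omega

lemma not_mem_Fk_pred (m k : ℕ) (hk1 : 1 ≤ k) (hkm : k ≤ m) :
    (⟨k - 1, by omega⟩ : Fin m) ∉ Fk m (k - 1) := by
  simp [mem_Fk]


-- sum over any card-k set is at most sum over first k, for antitone x
lemma sum_le_sum_Fk {m k : ℕ} (hkm : k ≤ m) {x : Fin m → ℝ} (hx : Antitone x)
    {s : Finset (Fin m)} (hs : s.card = k) :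
    ∑ i ∈ s, x i ≤ ∑ i ∈ Fk m k, x i := by
  classical
  set F := Fk m k with hF
  have hFc : F.card = k := card_Fk m k hkm
  by_cases hsd : (s \ F) = ∅
  · have hsub : s ⊆ F := by
      intro i hi
      by_contra hiF
      exact absurd (Finset.mem_sdiff.2 ⟨hi, hiF⟩) (by simp [hsd])
    have : s = F := Finset.eq_of_subset_of_card_le hsub (by omega)
    rw [this]
  · obtain ⟨j0, hj0⟩ := Finset.nonempty_iff_ne_empty.2 hsd
    have hj0' := Finset.mem_sdiff.1 hj0
    have hj0k : k ≤ (j0 : ℕ) := by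
      have := hj0'.2; rw [mem_Fk] at this; omega
    have hk1 : 1 ≤ k := by
      -- F \ s is nonempty
      have hcard : (s \ F).card = (F \ s).card := by
        have h1 := Finset.card_sdiff_add_card_inter s F
        have h2 := Finset.card_sdiff_add_card_inter F s
        rw [Finset.inter_comm] at h2
        omega
      have : (F \ s).Nonempty := by
        rw [← Finset.card_pos, ← hcard, Finset.card_pos]
        exact ⟨j0, hj0⟩
      obtain ⟨i0, hi0⟩ := this
      have := (mem_Fk.1 (Finset.mem_sdiff.1 hi0).1)
      omega
    have hkm' : k - 1 < m := by omega
    set t := x ⟨k - 1, hkm'⟩ with htdef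
    have hub : ∀ j ∈ s \ F, x j ≤ t := by
      intro j hj
      have hjk : k ≤ (j : ℕ) := by
        have := (Finset.mem_sdiff.1 hj).2; rw [mem_Fk] at this; omega
      exact hx (by rw [Fin.le_def]; simp; omega)
    have hlb : ∀ i ∈ F \ s, t ≤ x i := by
      intro i hi
      have hik : (i : ℕ) < k := mem_Fk.1 (Finset.mem_sdiff.1 hi).1
      exact hx (by rw [Fin.le_def]; simp; omega)
    have hcard : (s \ F).card = (F \ s).card := by
      have h1 := Finset.card_sdiff_add_card_inter s F
      have h2 := Finset.card_sdiff_add_card_inter F s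
      rw [Finset.inter_comm] at h2
      omega
    have h1 : ∑ j ∈ s \ F, x j ≤ (s \ F).card • t := Finset.sum_le_card_nsmul _ _ _ hub
    have h2 : (F \ s).card • t ≤ ∑ i ∈ F \ s, x i := Finset.card_nsmul_le_sum _ _ _ hlb
    have e1 : ∑ i ∈ s ∩ F, x i + ∑ i ∈ s \ F, x i = ∑ i ∈ s, x i :=
      Finset.sum_inter_add_sum_sdiff s F x
    have e2 : ∑ i ∈ F ∩ s, x i + ∑ i ∈ F \ s, x i = ∑ i ∈ F, x i :=
      Finset.sum_inter_add_sum_sdiff F s x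
    rw [Finset.inter_comm] at e2
    rw [hcard] at h1
    linarith
lemma topkSum_antitone {m k : ℕ} (hkm : k ≤ m) {x : Fin m → ℝ} (hx : Antitone x) :
    topkSum k x = ∑ i ∈ Fk m k, x i :=
  le_antisymm (topkSum_le hkm x fun s hs => sum_le_sum_Fk hkm hx hs)
    (le_topkSum x (card_Fk m k hkm))

lemma Bk_segment {m k : ℕ} (hkm : k ≤ m) {p w : Fin m → ℝ}
    (hp : p ∈ Bk m k) (hw : w ∈ Bk m k) {t : ℝ} (ht0 : 0 ≤ t) (ht1 : t ≤ 1) :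
    (fun i => p i + t * (w i - p i)) ∈ Bk m k := by
  show topkSum k _ ≤ 0
  refine topkSum_le hkm _ (fun s hs => ?_)
  have hps : ∑ i ∈ s, p i ≤ 0 := le_trans (le_topkSum p hs) hp
  have hws : ∑ i ∈ s, w i ≤ 0 := le_trans (le_topkSum w hs) hw
  have e : ∑ i ∈ s, (p i + t * (w i - p i)) = (1 - t) * ∑ i ∈ s, p i + t * ∑ i ∈ s, w i := by
    rw [Finset.mul_sum, Finset.mul_sum, ← Finset.sum_add_distrib]
    exact Finset.sum_congr rfl fun i _ => by ring
  rw [e]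
  nlinarith

lemma proj_unique {m : ℕ} {S : Set (Fin m → ℝ)} {y p q : Fin m → ℝ}
    (hp : IsEProjOn S y p) (hq : IsEProjOn S y q)
    (hmid : (fun i => p i + 2⁻¹ * (q i - p i)) ∈ S) : p = q := by
  have h2 : ∑ i, (y i - q i) ^ 2 ≤ ∑ i, (y i - p i) ^ 2 := hq.2 _ hp.1
  have h3 : ∑ i, (y i - p i) ^ 2 ≤ ∑ i, (y i - q i) ^ 2 := hp.2 _ hq.1
  have h1 := hp.2 _ hmid
  have e : ∀ i : Fin m, (y i - (p i + 2⁻¹ * (q i - p i))) ^ 2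
      = ((y i - p i) ^ 2 + (y i - q i) ^ 2) / 2 - (p i - q i) ^ 2 / 4 := fun i => by ring
  rw [Finset.sum_congr rfl fun i _ => e i, Finset.sum_sub_distrib] at h1
  have hsum : ∑ i, ((y i - p i) ^ 2 + (y i - q i) ^ 2) / 2
      = (∑ i, (y i - p i) ^ 2 + ∑ i, (y i - q i) ^ 2) / 2 := by
    rw [← Finset.sum_div, Finset.sum_add_distrib]
  rw [hsum] at h1
  have h4 : ∑ i, (p i - q i) ^ 2 / 4 ≤ 0 := by linarith
  have h5 : ∀ i ∈ Finset.univ, (0 : ℝ) ≤ (p i - q i) ^ 2 / 4 := fun i _ => by positivity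
  have h6 := (Finset.sum_eq_zero_iff_of_nonneg h5).1
    (le_antisymm h4 (Finset.sum_nonneg h5))
  funext i
  have := h6 i (Finset.mem_univ i)
  nlinarith [this]

lemma proj_VI {m k : ℕ} (hkm : k ≤ m) {y p : Fin m → ℝ} (hp : IsEProjOn (Bk m k) y p)
    (w : Fin m → ℝ) (hw : w ∈ Bk m k) :
    ∑ i, (y i - p i) * (w i - p i) ≤ 0 := by
  set A := ∑ i, (y i - p i) * (w i - p i) with hA
  set B := ∑ i, (w i - p i) ^ 2 with hB
  have hB0 : 0 ≤ B := Finset.sum_nonneg fun i _ => sq_nonneg _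
  have key : ∀ t : ℝ, 0 ≤ t → t ≤ 1 → 0 ≤ -2 * t * A + t ^ 2 * B := by
    intro t ht0 ht1
    have hm := hp.2 _ (Bk_segment hkm hp.1 hw ht0 ht1)
    have e : ∑ i, (y i - (p i + t * (w i - p i))) ^ 2
        = ∑ i, (y i - p i) ^ 2 - 2 * t * A + t ^ 2 * B := by
      have e1 : ∀ i : Fin m, (y i - (p i + t * (w i - p i))) ^ 2
          = (y i - p i) ^ 2 - 2 * t * ((y i - p i) * (w i - p i))
            + t ^ 2 * (w i - p i) ^ 2 := fun i => by ring
      rw [Finset.sum_congr rfl fun i _ => e1 i, Finset.sum_add_distrib,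
        Finset.sum_sub_distrib, ← Finset.mul_sum, ← Finset.mul_sum]
    rw [e] at hm
    linarith
  by_contra hA0
  push_neg at hA0
  set t := min 1 (A / (B + 1)) with ht
  have ht0 : 0 < t := lt_min one_pos (div_pos hA0 (by linarith))
  have ht1 : t ≤ 1 := min_le_left _ _
  have ht2 : t ≤ A / (B + 1) := min_le_right _ _
  have hk := key t (le_of_lt ht0) ht1
  have h1 : 2 * t * A ≤ t ^ 2 * B := by linarith
  have h2 : t ^ 2 * B ≤ t * (A / (B + 1)) * B := by
    have : t * B ≤ (A / (B + 1)) * B := mul_le_mul_of_nonneg_right ht2 hB0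
    nlinarith
  have h3 : t * (A / (B + 1)) * B < t * A := by
    have hBlt : A / (B + 1) * B < A := by
      rw [div_mul_eq_mul_div, div_lt_iff₀ (by linarith)]
      nlinarith
    have := mul_lt_mul_of_pos_left hBlt ht0
    linarith [this]
  nlinarith

lemma VI_proj {m : ℕ} {S : Set (Fin m → ℝ)} {y q : Fin m → ℝ} (hq : q ∈ S)
    (h : ∀ w ∈ S, ∑ i, (y i - q i) * (w i - q i) ≤ 0) : IsEProjOn S y q := by
  refine ⟨hq, fun w hw => ?_⟩
  have e : ∑ i, (y i - w i) ^ 2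
      = ∑ i, (y i - q i) ^ 2 - 2 * ∑ i, (y i - q i) * (w i - q i)
        + ∑ i, (w i - q i) ^ 2 := by
    rw [Finset.mul_sum, ← Finset.sum_sub_distrib, ← Finset.sum_add_distrib]
    exact Finset.sum_congr rfl fun i _ => by ring
  have hB : 0 ≤ ∑ i, (w i - q i) ^ 2 := Finset.sum_nonneg fun i _ => sq_nonneg _
  have := h w hw
  linarith


lemma topkSum_perm {m k : ℕ} (x : Fin m → ℝ) (σ : Equiv.Perm (Fin m)) :
    topkSum k (x ∘ σ) = topkSum k x := by
  unfold topkSum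
  congr 1
  ext v
  constructor
  · rintro ⟨s, hs, rfl⟩
    refine ⟨s.map σ.toEmbedding, by simp [hs], ?_⟩
    rw [Finset.sum_map]
    rfl
  · rintro ⟨s, hs, rfl⟩
    refine ⟨s.map σ.symm.toEmbedding, by simp [hs], ?_⟩
    rw [Finset.sum_map]
    exact Finset.sum_congr rfl fun i _ => by simp

lemma sum_sq_swap {m : ℕ} (y p : Fin m → ℝ) (a b : Fin m) (hab : a ≠ b) :
    ∑ i, (y i - (p ∘ Equiv.swap a b) i) ^ 2
      = ∑ i, (y i - p i) ^ 2 + 2 * (y a - y b) * (p a - p b) := by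
  have key : ∑ i, ((y i - (p ∘ Equiv.swap a b) i) ^ 2 - (y i - p i) ^ 2)
      = 2 * (y a - y b) * (p a - p b) := by
    rw [← Finset.sum_subset (Finset.subset_univ {a, b})]
    · rw [Finset.sum_pair hab]
      simp only [Function.comp_apply, Equiv.swap_apply_left, Equiv.swap_apply_right]
      ring
    · intro x _ hx
      simp only [Finset.mem_insert, Finset.mem_singleton, not_or] at hx
      rw [Function.comp_apply, Equiv.swap_apply_of_ne_of_ne hx.1 hx.2]
      ring
  rw [Finset.sum_sub_distrib] at key
  linarith

lemma proj_antitone {m k : ℕ} (hkm : k ≤ m) {y p : Fin m → ℝ} (hy : Antitone y)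
    (hp : IsEProjOn (Bk m k) y p) : Antitone p := by
  intro a b hab
  by_contra hlt
  push_neg at hlt
  have hab' : a ≠ b := by
    intro h; rw [h] at hlt; exact lt_irrefl _ hlt
  set p' := p ∘ Equiv.swap a b with hp'def
  have hp'mem : p' ∈ Bk m k := by
    show topkSum k p' ≤ 0
    rw [hp'def, topkSum_perm]
    exact hp.1
  have hdist := sum_sq_swap y p a b hab'
  have hya : y b ≤ y a := hy hab
  have hnonpos : 2 * (y a - y b) * (p a - p b) ≤ 0 := by nlinarith
  have hp'proj : IsEProjOn (Bk m k) y p' := by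
    refine ⟨hp'mem, fun w hw => ?_⟩
    calc ∑ i, (y i - p' i) ^ 2 ≤ ∑ i, (y i - p i) ^ 2 := by rw [hdist]; linarith
    _ ≤ ∑ i, (y i - w i) ^ 2 := hp.2 w hw
  have := proj_unique hp hp'proj (Bk_segment hkm hp.1 hp'mem (t := 2⁻¹) (by norm_num) (by norm_num))
  have : p a = p' a := congrFun this a
  rw [hp'def] at this
  simp only [Function.comp_apply, Equiv.swap_apply_left] at this
  rw [this] at hlt
  exact lt_irrefl _ hlt

-- boundary: if y ∉ Bk then topkSum of the projection is 0
lemma proj_boundary {m k : ℕ} (hkm : k ≤ m) {y p : Fin m → ℝ}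
    (hy : 0 < topkSum k y) (hp : IsEProjOn (Bk m k) y p) :
    topkSum k p = 0 := by
  have hmem : topkSum k p ≤ 0 := hp.1
  rcases lt_or_eq_of_le hmem with hT | hT
  · exfalso
    set T := topkSum k p with hTdef
    set C := (∑ i, |y i - p i|) + 1 with hC
    have hC0 : 0 < C := by
      have : 0 ≤ ∑ i, |y i - p i| := Finset.sum_nonneg fun i _ => abs_nonneg _
      linarith
    set t := min 1 (-T / C) with ht
    have ht0 : 0 < t := lt_min one_pos (div_pos (by linarith) hC0)
    have ht1 : t ≤ 1 := min_le_left _ _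
    have htC : t * C ≤ -T := by
      have h2 : t ≤ -T / C := min_le_right _ _
      rw [div_eq_mul_inv] at h2
      calc t * C ≤ (-T * C⁻¹) * C := mul_le_mul_of_nonneg_right h2 (le_of_lt hC0)
      _ = -T := by field_simp
    set w := fun i => p i + t * (y i - p i) with hw
    have hwmem : w ∈ Bk m k := by
      show topkSum k w ≤ 0
      refine topkSum_le hkm _ (fun s hs => ?_)
      have h1 : ∑ i ∈ s, p i ≤ T := le_topkSum p hs
      have h2 : ∑ i ∈ s, (y i - p i) ≤ C := by
        calc ∑ i ∈ s, (y i - p i) ≤ ∑ i ∈ s, |y i - p i| :=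
          Finset.sum_le_sum fun i _ => le_abs_self _
        _ ≤ ∑ i, |y i - p i| :=
          Finset.sum_le_sum_of_subset_of_nonneg (Finset.subset_univ s)
            (fun i _ _ => abs_nonneg _)
        _ ≤ C := by linarith
      have e : ∑ i ∈ s, w i = ∑ i ∈ s, p i + t * ∑ i ∈ s, (y i - p i) := by
        rw [Finset.mul_sum, ← Finset.sum_add_distrib]
      rw [e]
      have : t * ∑ i ∈ s, (y i - p i) ≤ t * C := mul_le_mul_of_nonneg_left h2 (le_of_lt ht0)
      linarith
    have hmin := hp.2 w hwmem
    have e : ∑ i, (y i - w i) ^ 2 = (1 - t) ^ 2 * ∑ i, (y i - p i) ^ 2 := by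
      rw [Finset.mul_sum]
      exact Finset.sum_congr rfl fun i _ => by rw [hw]; ring
    rw [e] at hmin
    have hsq : 0 ≤ ∑ i, (y i - p i) ^ 2 := Finset.sum_nonneg fun i _ => sq_nonneg _
    have hfac : (1 - t) ^ 2 < 1 := by nlinarith
    have hzero : ∑ i, (y i - p i) ^ 2 ≤ 0 := by nlinarith
    have heq : ∀ i ∈ Finset.univ, (y i - p i) ^ 2 = 0 :=
      (Finset.sum_eq_zero_iff_of_nonneg fun i _ => sq_nonneg _).1
        (le_antisymm hzero hsq)
    have hyp : y = p := by
      funext i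
      have := heq i (Finset.mem_univ i)
      nlinarith [this]
    rw [hTdef, ← hyp] at hT
    linarith
  · exact hT

-- the local explicit formula for the projection
lemma local_formula (m k : ℕ) (hk1 : 1 ≤ k) (hkm : k ≤ m) (z : Fin m → ℝ)
    (hs : 0 < ∑ j ∈ Fk m k, z j)
    (hsep : ∀ i j : Fin m, (i : ℕ) < k → k ≤ (j : ℕ) →
      z j + (∑ l ∈ Fk m k, z l) / k < z i) :
    IsEProjOn (Bk m k) z
      (fun i => if (i : ℕ) < k then z i - (∑ l ∈ Fk m k, z l) / k else z i) := by
  classical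
  set s0 := ∑ l ∈ Fk m k, z l with hs0
  set lam := s0 / k with hlam
  have hk0 : (0 : ℝ) < k := by exact_mod_cast hk1
  have hlam0 : 0 < lam := div_pos hs hk0
  set q := fun i : Fin m => if (i : ℕ) < k then z i - lam else z i with hq
  have hqF : ∀ i ∈ Fk m k, q i = z i - lam := by
    intro i hi
    rw [hq]
    simp [mem_Fk.1 hi]
  have hqG : ∀ i : Fin m, i ∉ Fk m k → q i = z i := by
    intro i hi
    rw [hq]
    simp [mem_Fk.not.1 hi]
  have hsumF : ∑ i ∈ Fk m k, q i = 0 := by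
    rw [Finset.sum_congr rfl hqF, Finset.sum_sub_distrib, Finset.sum_const,
      card_Fk m k hkm, nsmul_eq_mul, hlam]
    field_simp
    rw [hs0, sub_self]
  have hqmem : q ∈ Bk m k := by
    show topkSum k q ≤ 0
    refine topkSum_le hkm _ (fun S hS => ?_)
    by_cases hSF : S = Fk m k
    · rw [hSF, hsumF]
    · -- S ≠ F
      set F := Fk m k with hF
      have hFc : F.card = k := card_Fk m k hkm
      have hFS : (F \ S).Nonempty := by
        rw [Finset.sdiff_nonempty]
        intro hsub
        exact hSF (Finset.eq_of_subset_of_card_le hsub (by omega)).symm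
      have hcard : (S \ F).card = (F \ S).card := by
        have h1 := Finset.card_sdiff_add_card_inter S F
        have h2 := Finset.card_sdiff_add_card_inter F S
        rw [Finset.inter_comm] at h2
        omega
      -- pairing bound
      have hpair : ∀ j ∈ S \ F, ∀ i ∈ F \ S, z j ≤ z i - lam := by
        intro j hj i hi
        have hjk : k ≤ (j : ℕ) := by
          have := (Finset.mem_sdiff.1 hj).2; rw [hF, mem_Fk] at this; omega
        have hik : (i : ℕ) < k := by
          have := (Finset.mem_sdiff.1 hi).1; rw [hF] at this; exact mem_Fk.1 this
        have := hsep i j hik hjk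
        linarith
      set img := (F \ S).image (fun i => z i - lam) with himg
      have himgne : img.Nonempty := hFS.image _
      set c0 := img.min' himgne with hc0
      obtain ⟨i0, hi0, hi0e⟩ := Finset.mem_image.1 (img.min'_mem himgne)
      have hub : ∀ j ∈ S \ F, z j ≤ c0 := fun j hj => by
        rw [hc0, ← hi0e]
        exact hpair j hj i0 hi0
      have hlb : ∀ i ∈ F \ S, c0 ≤ z i - lam := fun i hi =>
        img.min'_le _ (Finset.mem_image_of_mem _ hi)
      have h1 : ∑ j ∈ S \ F, z j ≤ (S \ F).card • c0 := Finset.sum_le_card_nsmul _ _ _ hub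
      have h2 : (F \ S).card • c0 ≤ ∑ i ∈ F \ S, (z i - lam) :=
        Finset.card_nsmul_le_sum _ _ _ hlb
      rw [hcard] at h1
      have e1 : ∑ i ∈ S ∩ F, q i + ∑ i ∈ S \ F, q i = ∑ i ∈ S, q i :=
        Finset.sum_inter_add_sum_sdiff S F q
      have e2 : ∑ i ∈ F ∩ S, q i + ∑ i ∈ F \ S, q i = ∑ i ∈ F, q i :=
        Finset.sum_inter_add_sum_sdiff F S q
      rw [Finset.inter_comm] at e2
      have e3 : ∑ i ∈ S \ F, q i = ∑ i ∈ S \ F, z i := by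
        refine Finset.sum_congr rfl fun i hi => hqG i (Finset.mem_sdiff.1 hi).2
      have e4 : ∑ i ∈ F \ S, q i = ∑ i ∈ F \ S, (z i - lam) := by
        refine Finset.sum_congr rfl fun i hi => hqF i (Finset.mem_sdiff.1 hi).1
      rw [hF] at e2
      rw [hsumF] at e2
      -- goal : ∑ i ∈ S, q i ≤ 0
      have : ∑ i ∈ S, q i = ∑ i ∈ S ∩ F, q i + ∑ i ∈ S \ F, z i := by rw [← e3, e1]
      rw [this]
      have : ∑ i ∈ S ∩ F, q i = - ∑ i ∈ F \ S, (z i - lam) := by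
        rw [← e4]; linarith
      rw [this]
      linarith
  refine VI_proj hqmem (fun w hw => ?_)
  have e : ∑ i, (z i - q i) * (w i - q i) = ∑ i ∈ Fk m k, lam * (w i - q i) := by
    refine (Finset.sum_subset (Finset.subset_univ (Fk m k)) ?_).symm.trans ?_
    · intro i _ hi
      rw [hqG i hi]
      ring
    · refine Finset.sum_congr rfl fun i hi => ?_
      rw [hqF i hi]
      ring
  rw [e, ← Finset.mul_sum]
  have hwF : ∑ i ∈ Fk m k, w i ≤ 0 :=
    le_trans (le_topkSum w (card_Fk m k hkm)) hw
  have : ∑ i ∈ Fk m k, (w i - q i) = ∑ i ∈ Fk m k, w i := by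
    rw [Finset.sum_sub_distrib, hsumF, sub_zero]
  rw [this]
  exact mul_nonpos_of_nonneg_of_nonpos (le_of_lt hlam0) hwF

theorem proj_jacobian_case_c
    (m k : ℕ) (hk1 : 1 ≤ k) (hkm : k ≤ m)
    (P : (Fin m → ℝ) → (Fin m → ℝ)) (hP : ∀ z, IsEProjOn (Bk m k) z (P z))
    (y ybar : Fin m → ℝ) (hsorted : Antitone y) (hpos : 0 < topkSum k y)
    (hybar : P y = ybar)
    (k0 k1 : ℕ) (hk0 : k0 < k) (hkk1 : k ≤ k1) (hk1m : k1 ≤ m)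
    (hpair : IsIndexPairOf k ybar k0 k1)
    (hkeq : k = k1)
    (c : Fin k1 → ℝ) (hc : ∀ i, c i = 1) :
    HasFDerivAt P
      (LinearMap.toContinuousLinearMap (Matrix.mulVecLin (Matrix.of fun i j : Fin m =>
        if h : (i : ℕ) < k1 ∧ (j : ℕ) < k1 then
          (if i = j then 1 else 0) -
            c ⟨(i : ℕ), h.1⟩ * c ⟨(j : ℕ), h.2⟩ / (∑ l, c l ^ 2)
        else if i = j then 1 else 0))) y := by
  classical
  subst hkeq
  set p := ybar with hpdef
  have hproj : IsEProjOn (Bk m k) y p := hybar ▸ hP y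
  have hpant : Antitone p := proj_antitone hkm hsorted hproj
  have hmemp : topkSum k p = 0 := proj_boundary hkm hpos hproj
  have hFp : ∑ i ∈ Fk m k, p i = 0 := by
    rw [← topkSum_antitone hkm hpant]; exact hmemp
  have hkR : (0 : ℝ) < (k : ℝ) := by exact_mod_cast hk1
  -- the gap
  have hgap : ∃ d : ℝ, 0 < d ∧ ∀ S : Finset (Fin m), S.card = k → S ≠ Fk m k →
      ∑ i ∈ S, p i ≤ -d := by
    by_cases hkm' : k < m
    · have hlast := hpair.2.2.2.2.2
      have e1 : entE p (k + 1) = ((p ⟨k, hkm'⟩ : ℝ) : EReal) := by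
        rw [entE, dif_pos ⟨by omega, by omega⟩]
        congr 1
      have e2 : entE p k = ((p ⟨k - 1, by omega⟩ : ℝ) : EReal) := by
        rw [entE, dif_pos ⟨by omega, by omega⟩]
      rw [e1, e2, EReal.coe_lt_coe_iff] at hlast
      refine ⟨p ⟨k - 1, by omega⟩ - p ⟨k, hkm'⟩, by linarith, ?_⟩
      intro S hS hSF
      have hSd : (S \ Fk m k).Nonempty := by
        rw [Finset.sdiff_nonempty]
        intro hsub
        exact hSF (Finset.eq_of_subset_of_card_le hsub (by rw [card_Fk m k hkm, hS]))
      obtain ⟨j0, hj0⟩ := hSd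
      have hj0S : j0 ∈ S := (Finset.mem_sdiff.1 hj0).1
      have hj0k : k ≤ (j0 : ℕ) := by
        have := (Finset.mem_sdiff.1 hj0).2; rw [mem_Fk] at this; omega
      have hesum : ∑ i ∈ S.erase j0, p i + p j0 = ∑ i ∈ S, p i :=
        Finset.sum_erase_add S p hj0S
      have hecard : (S.erase j0).card = k - 1 := by
        rw [Finset.card_erase_of_mem hj0S, hS]
      have h1 : ∑ i ∈ S.erase j0, p i ≤ ∑ i ∈ Fk m (k - 1), p i :=
        sum_le_sum_Fk (by omega) hpant hecard
      have h2 : ∑ i ∈ Fk m k, p i = p ⟨k - 1, by omega⟩ + ∑ i ∈ Fk m (k - 1), p i := by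
        rw [Fk_succ m k hk1 hkm, Finset.sum_insert (not_mem_Fk_pred m k hk1 hkm)]
      have h3 : p j0 ≤ p ⟨k, hkm'⟩ := hpant (by rw [Fin.le_def]; simpa using hj0k)
      have h4 : ∑ i ∈ Fk m (k - 1), p i = - p ⟨k - 1, by omega⟩ := by
        rw [h2] at hFp; linarith
      linarith
    · refine ⟨1, one_pos, fun S hS hSF => absurd ?_ hSF⟩
      have hk : k = m := by omega
      have h1 : S = Finset.univ := Finset.eq_univ_of_card S (by rw [hS, hk, Fintype.card_fin])
      have h2 : Fk m k = Finset.univ :=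
        Finset.eq_univ_of_card _ (by rw [card_Fk m k hkm, hk, Fintype.card_fin])
      rw [h1, h2]
  obtain ⟨d, hd0, hgap'⟩ := hgap
  -- off-block coordinates are fixed
  have h5 : ∀ j : Fin m, k ≤ (j : ℕ) → p j = y j := by
    intro j hj
    by_contra hne
    set cc := if 0 ≤ y j - p j then d else -d with hcc
    have hccabs : cc = d ∨ cc = -d := by
      rw [hcc]
      split_ifs
      exacts [Or.inl rfl, Or.inr rfl]
    set w := fun i => p i + (if i = j then cc else 0) with hw
    have hwmem : w ∈ Bk m k := by
      show topkSum k w ≤ 0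
      refine topkSum_le hkm _ (fun S hS => ?_)
      have e : ∑ i ∈ S, w i = ∑ i ∈ S, p i + (if j ∈ S then cc else 0) := by
        rw [hw, Finset.sum_add_distrib, Finset.sum_ite_eq' S j (fun _ => cc)]
      rw [e]
      by_cases hjS : j ∈ S
      · have hSF : S ≠ Fk m k := by
          intro hSF
          rw [hSF, mem_Fk] at hjS; omega
        have := hgap' S hS hSF
        rw [if_pos hjS]
        rcases hccabs with h | h <;> rw [h] <;> linarith
      · have : ∑ i ∈ S, p i ≤ 0 := le_trans (le_topkSum p hS) (le_of_eq hmemp)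
        rw [if_neg hjS, add_zero]
        linarith
    have hvi := proj_VI hkm hproj w hwmem
    have e : ∑ i, (y i - p i) * (w i - p i) = (y j - p j) * cc := by
      rw [hw]
      have : ∀ i : Fin m, (y i - p i) * (p i + (if i = j then cc else 0) - p i)
          = (if i = j then (y i - p i) * cc else 0) := by
        intro i; split_ifs <;> ring
      rw [Finset.sum_congr rfl fun i _ => this i,
        Finset.sum_ite_eq' Finset.univ j (fun i => (y i - p i) * cc)]
      simp
    rw [e] at hvi
    rcases hccabs with h | h
    · rw [h] at hvi
      have hyp0 : 0 ≤ y j - p j := by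
        by_contra hcon
        rw [hcc, if_neg hcon] at h; linarith
      have : y j - p j ≤ 0 := by nlinarith
      exact hne (by linarith)
    · rw [h] at hvi
      have hyp0 : ¬ (0 ≤ y j - p j) := by
        intro hcon
        rw [hcc, if_pos hcon] at h; linarith
      push_neg at hyp0
      nlinarith
  -- constancy of y - p on the block
  have h6le : ∀ a b : Fin m, (a : ℕ) < k → (b : ℕ) < k → y a - p a ≤ y b - p b := by
    intro a b ha hb
    by_cases hab : a = b
    · rw [hab]
    · set w := fun i => p i + ((if i = a then d else 0) + (if i = b then -d else 0)) with hw
      have hwmem : w ∈ Bk m k := by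
        show topkSum k w ≤ 0
        refine topkSum_le hkm _ (fun S hS => ?_)
        have e : ∑ i ∈ S, w i = ∑ i ∈ S, p i
            + ((if a ∈ S then d else 0) + (if b ∈ S then -d else 0)) := by
          rw [hw]
          rw [Finset.sum_add_distrib, Finset.sum_add_distrib,
            Finset.sum_ite_eq' S a (fun _ => d), Finset.sum_ite_eq' S b (fun _ => -d)]
        rw [e]
        by_cases hSF : S = Fk m k
        · have haS : a ∈ S := by rw [hSF, mem_Fk]; exact ha
          have hbS : b ∈ S := by rw [hSF, mem_Fk]; exact hb
          rw [if_pos haS, if_pos hbS, hSF, hFp]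
          ring_nf
          linarith
        · have := hgap' S hS hSF
          split_ifs <;> linarith
      have hvi := proj_VI hkm hproj w hwmem
      have e : ∑ i, (y i - p i) * (w i - p i)
          = (y a - p a) * d + (y b - p b) * (-d) := by
        rw [hw]
        have e1 : ∀ i : Fin m, (y i - p i) * (p i + ((if i = a then d else 0)
            + (if i = b then -d else 0)) - p i)
            = (if i = a then (y i - p i) * d else 0)
              + (if i = b then (y i - p i) * (-d) else 0) := by
          intro i
          have hba : ¬ b = a := fun h => hab h.symm
          by_cases h1 : i = a <;> by_cases h2 : i = b
          · exact absurd (h1 ▸ h2) hab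
          · subst h1; simp [hab]
          · subst h2; simp [hba]
          · simp [h1, h2]
        rw [Finset.sum_congr rfl fun i _ => e1 i, Finset.sum_add_distrib,
          Finset.sum_ite_eq' Finset.univ a (fun i => (y i - p i) * d),
          Finset.sum_ite_eq' Finset.univ b (fun i => (y i - p i) * (-d))]
        simp
      rw [e] at hvi
      nlinarith
  set lam := (∑ i ∈ Fk m k, y i) / k with hlam
  have h7 : ∀ i : Fin m, (i : ℕ) < k → p i = y i - lam := by
    intro i hi
    have e1 : ∑ b ∈ Fk m k, (y b - p b) = ∑ b ∈ Fk m k, (y i - p i) := by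
      refine Finset.sum_congr rfl fun b hb => ?_
      have hbk := mem_Fk.1 hb
      exact le_antisymm (h6le b i hbk hi) (h6le i b hi hbk)
    rw [Finset.sum_sub_distrib, hFp, sub_zero, Finset.sum_const, card_Fk m k hkm,
      nsmul_eq_mul] at e1
    have : y i - p i = lam := by
      rw [hlam, e1, mul_div_cancel_left₀ _ (ne_of_gt hkR)]
    linarith
  -- positivity of the block sum of y
  have hsy : 0 < ∑ i ∈ Fk m k, y i := by
    rw [← topkSum_antitone hkm hsorted]; exact hpos
  -- the crux separation at y
  have hcrux : ∀ i j : Fin m, (i : ℕ) < k → k ≤ (j : ℕ) →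
      y j + (∑ l ∈ Fk m k, y l) / k < y i := by
    intro i j hi hj
    have hkm' : k < m := lt_of_le_of_lt hj j.isLt
    have hlast := hpair.2.2.2.2.2
    have e1 : entE p (k + 1) = ((p ⟨k, hkm'⟩ : ℝ) : EReal) := by
      rw [entE, dif_pos ⟨by omega, by omega⟩]
      congr 1
    have e2 : entE p k = ((p ⟨k - 1, by omega⟩ : ℝ) : EReal) := by
      rw [entE, dif_pos ⟨by omega, by omega⟩]
    rw [e1, e2, EReal.coe_lt_coe_iff] at hlast
    have hp1 : p ⟨k, hkm'⟩ = y ⟨k, hkm'⟩ := h5 _ (by simp)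
    have hp2 : p ⟨k - 1, by omega⟩ = y ⟨k - 1, by omega⟩ - lam := h7 _ (by simp; omega)
    have hy1 : y j ≤ y ⟨k, hkm'⟩ := hsorted (by rw [Fin.le_def]; simpa using hj)
    have hy2 : y ⟨k - 1, by omega⟩ ≤ y i := hsorted (by rw [Fin.le_def]; simp; omega)
    rw [hp1, hp2] at hlast
    rw [← hlam]
    linarith
  -- the affine formula near y
  set L := LinearMap.toContinuousLinearMap (Matrix.mulVecLin (Matrix.of fun i j : Fin m =>
    if h : (i : ℕ) < k ∧ (j : ℕ) < k then
      (if i = j then 1 else 0) - c ⟨(i : ℕ), h.1⟩ * c ⟨(j : ℕ), h.2⟩ / (∑ l, c l ^ 2)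
    else if i = j then 1 else 0)) with hL
  have hcsum : (∑ l : Fin k, (1 : ℝ) ^ 2) = (k : ℝ) := by
    simp
  have hLeval : ∀ z : Fin m → ℝ, L z =
      fun i : Fin m => if (i : ℕ) < k then z i - (∑ l ∈ Fk m k, z l) / (k : ℝ) else z i := by
    intro z
    funext i
    rw [hL]
    simp only [LinearMap.coe_toContinuousLinearMap', Matrix.mulVecLin_apply]
    rw [Matrix.mulVec, dotProduct]
    simp only [Matrix.of_apply, hc, hcsum, one_mul]
    
    rw [← Finset.sum_filter_add_sum_filter_not Finset.univ (fun j : Fin m => (j : ℕ) < k)]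
    by_cases hi : (i : ℕ) < k
    · rw [if_pos hi]
      have e1 : ∀ j ∈ Finset.univ.filter (fun j : Fin m => (j : ℕ) < k),
          (if h : (i : ℕ) < k ∧ (j : ℕ) < k then
            (if i = j then (1:ℝ) else 0) - 1 / (k : ℝ)
          else if i = j then 1 else 0) * z j
          = (if i = j then z j else 0) - z j / k := by
        intro j hj
        rw [dif_pos ⟨hi, (Finset.mem_filter.1 hj).2⟩]
        split_ifs <;> ring
      have e2 : ∀ j ∈ Finset.univ.filter (fun j : Fin m => ¬ (j : ℕ) < k),
          (if h : (i : ℕ) < k ∧ (j : ℕ) < k then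
            (if i = j then (1:ℝ) else 0) - 1 / (k : ℝ)
          else if i = j then 1 else 0) * z j
          = (if i = j then z j else 0) := by
        intro j hj
        rw [dif_neg (fun h => (Finset.mem_filter.1 hj).2 h.2)]
        split_ifs <;> ring
      rw [Finset.sum_congr rfl e1, Finset.sum_congr rfl e2, Finset.sum_sub_distrib]
      have m1 : i ∈ Finset.univ.filter (fun j : Fin m => (j : ℕ) < k) := by
        simp only [Finset.mem_filter, Finset.mem_univ, true_and]; exact hi
      have m2 : i ∉ Finset.univ.filter (fun j : Fin m => ¬ (j : ℕ) < k) := by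
        simp only [Finset.mem_filter, Finset.mem_univ, true_and]; exact fun h => h hi
      rw [Finset.sum_ite_eq _ i (fun j => z j), Finset.sum_ite_eq _ i (fun j => z j),
        if_pos m1, if_neg m2]
      have : Finset.univ.filter (fun j : Fin m => (j : ℕ) < k) = Fk m k := rfl
      rw [this, add_zero, ← Finset.sum_div]
    · rw [if_neg hi]
      have e1 : ∀ j ∈ Finset.univ.filter (fun j : Fin m => (j : ℕ) < k),
          (if h : (i : ℕ) < k ∧ (j : ℕ) < k then
            (if i = j then (1:ℝ) else 0) - 1 / (k : ℝ)
          else if i = j then 1 else 0) * z j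
          = (if i = j then z j else 0) := by
        intro j hj
        rw [dif_neg (by intro h; exact hi h.1)]
        split_ifs <;> ring
      have e2 : ∀ j ∈ Finset.univ.filter (fun j : Fin m => ¬ (j : ℕ) < k),
          (if h : (i : ℕ) < k ∧ (j : ℕ) < k then
            (if i = j then (1:ℝ) else 0) - 1 / (k : ℝ)
          else if i = j then 1 else 0) * z j
          = (if i = j then z j else 0) := by
        intro j hj
        rw [dif_neg (by intro h; exact hi h.1)]
        split_ifs <;> ring
      rw [Finset.sum_congr rfl e1, Finset.sum_congr rfl e2]
      have m1 : i ∉ Finset.univ.filter (fun j : Fin m => (j : ℕ) < k) := by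
        simp only [Finset.mem_filter, Finset.mem_univ, true_and]; exact hi
      have m2 : i ∈ Finset.univ.filter (fun j : Fin m => ¬ (j : ℕ) < k) := by
        simp only [Finset.mem_filter, Finset.mem_univ, true_and]; exact hi
      rw [Finset.sum_ite_eq _ i (fun j => z j), Finset.sum_ite_eq _ i (fun j => z j),
        if_neg m1, if_pos m2, zero_add]
  -- the eventual equality
  have hev1 : ∀ᶠ z in 𝓝 y, 0 < ∑ j ∈ Fk m k, z j := by
    have hcont : Continuous fun z : Fin m → ℝ => ∑ j ∈ Fk m k, z j :=
      continuous_finset_sum _ fun l _ => continuous_apply l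
    exact (hcont.tendsto y).eventually (eventually_gt_nhds hsy)
  have hev2 : ∀ i j : Fin m, ∀ᶠ z in 𝓝 y,
      ((i : ℕ) < k → k ≤ (j : ℕ) → z j + (∑ l ∈ Fk m k, z l) / (k : ℝ) < z i) := by
    intro i j
    by_cases hij : (i : ℕ) < k ∧ k ≤ (j : ℕ)
    · have hcont1 : Continuous fun z : Fin m → ℝ => z j + (∑ l ∈ Fk m k, z l) / k :=
        (continuous_apply j).add
          ((continuous_finset_sum _ fun l _ => continuous_apply l).div_const _)
      have hcont2 : Continuous fun z : Fin m → ℝ => z i := continuous_apply i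
      have := (hcont1.tendsto y).eventually_lt (hcont2.tendsto y)
        (hcrux i j hij.1 hij.2)
      filter_upwards [this] with z hz _ _
      exact hz
    · filter_upwards with z h1 h2
      exact absurd ⟨h1, h2⟩ hij
  have hev : ∀ᶠ z in 𝓝 y, P z = L z := by
    have hall : ∀ᶠ z in 𝓝 y, ∀ i j : Fin m,
        ((i : ℕ) < k → k ≤ (j : ℕ) → z j + (∑ l ∈ Fk m k, z l) / (k : ℝ) < z i) :=
      eventually_all.2 fun i => eventually_all.2 fun j => hev2 i j
    filter_upwards [hev1, hall] with z hz1 hz2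
    have hloc := local_formula m k hk1 hkm z hz1 hz2
    have := proj_unique (hP z) hloc
      (Bk_segment hkm (hP z).1 hloc.1 (t := 2⁻¹) (by norm_num) (by norm_num))
    rw [this, hLeval z]
  exact (L.hasFDerivAt).congr_of_eventuallyEq hev
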